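/- arXiv:1907.03155 — 2 statements merged into one kernel-verified Lean document; each statement's English description precedes it below -/
import Mathlib

section
/- Let y ≥ 0 be a natural number, α ∈ [0,1], and λ_1, …, λ_h > 0 real numbers. Define the h-step DP-INAR transition distribution on the natural numbers as the result of starting from the point mass at y and applying, for i = 1, …, h in order, the one-step transition that sends a count n to (α ∘ n) + Z_i, where α ∘ n is a Binomial(n, α) random variable (binomial thinning) and Z_i is an independent Poisson(λ_i) innovation. Then this h-step distribution equals the convolution of a Binomial(y, α^h) distribution and a Poisson(μ_h) distribution, where μ_h = Σ_{i=1}^h α^{h−i} λ_i; explicitly, its probability mass at k is Σ_{m=0}^{min(y,k)} C(y,m) (α^h)^m (1−α^h)^{y−m} e^{−μ_h} μ_h^{k−m}/(k−m)!. -/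
open scoped BigOperators

open Finset

/-- Probability mass function of a Binomial(n, α) distribution at m. -/
noncomputable def binomPMF (n : ℕ) (α : ℝ) (m : ℕ) : ℝ :=
  (n.choose m : ℝ) * α ^ m * (1 - α) ^ (n - m)

/-- Probability mass function of a Poisson(lam) distribution at k. -/
noncomputable def poissonPMF (lam : ℝ) (k : ℕ) : ℝ :=
  Real.exp (-lam) * lam ^ k / (Nat.factorial k : ℝ)

noncomputable def conv (f g : ℕ → ℝ) (k : ℕ) : ℝ :=
  ∑ p ∈ Finset.HasAntidiagonal.antidiagonal k, f p.1 * g p.2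

lemma binomPMF_eq_zero {n m : ℕ} (α : ℝ) (h : n < m) : binomPMF n α m = 0 := by
  simp [binomPMF, Nat.choose_eq_zero_of_lt h]

lemma poissonPMF_eq (μ : ℝ) : poissonPMF μ = fun k => Real.exp (-μ) * (μ ^ k / (Nat.factorial k : ℝ)) := by
  funext k; rw [poissonPMF, mul_div_assoc]

lemma summable_poissonPMF (μ : ℝ) : Summable (poissonPMF μ) := by
  rw [poissonPMF_eq]
  exact (Real.summable_pow_div_factorial μ).mul_left _

lemma summable_norm_of_summable {f : ℕ → ℝ} (h : Summable f) : Summable fun n => ‖f n‖ :=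
  summable_norm_iff.mpr h

lemma summable_of_fin_support {f : ℕ → ℝ} {N : ℕ} (h : ∀ n, N < n → f n = 0) : Summable f := by
  apply summable_of_ne_finset_zero (s := Finset.range (N + 1))
  intro n hn
  exact h n (by simpa using hn)

lemma coeff_conv (f g : ℕ → ℝ) (k : ℕ) :
    conv f g k = PowerSeries.coeff k (PowerSeries.mk f * PowerSeries.mk g) := by
  rw [PowerSeries.coeff_mul]; simp [conv]

lemma mk_conv (f g : ℕ → ℝ) :
    PowerSeries.mk (conv f g) = PowerSeries.mk f * PowerSeries.mk g := by
  ext n; rw [PowerSeries.coeff_mk, coeff_conv]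

lemma conv_assoc (f g h : ℕ → ℝ) : conv (conv f g) h = conv f (conv g h) := by
  funext k
  rw [coeff_conv, mk_conv, coeff_conv, mk_conv, mul_assoc]

lemma pois_mul_binom (μ α : ℝ) (d s : ℕ) :
    poissonPMF μ s * binomPMF s α d =
      (Real.exp (-μ) * α ^ d * μ ^ d / (Nat.factorial d : ℝ)) *
        (if d ≤ s then (μ * (1 - α)) ^ (s - d) / (Nat.factorial (s - d) : ℝ) else 0) := by
  by_cases hds : d ≤ s
  · obtain ⟨t, rfl⟩ := Nat.exists_eq_add_of_le hds
    rw [if_pos hds, poissonPMF, binomPMF]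
    have hfac : ((d + t).choose d : ℝ) * (Nat.factorial d : ℝ) * (Nat.factorial t : ℝ)
        = (Nat.factorial (d + t) : ℝ) := by
      have := Nat.choose_mul_factorial_mul_factorial (Nat.le_add_right d t)
      rw [Nat.add_sub_cancel_left] at this
      exact_mod_cast congrArg Nat.cast this
    have h1 : d + t - d = t := by omega
    rw [h1]
    have hd : (Nat.factorial d : ℝ) ≠ 0 := Nat.cast_ne_zero.mpr (Nat.factorial_ne_zero d)
    have ht : (Nat.factorial t : ℝ) ≠ 0 := Nat.cast_ne_zero.mpr (Nat.factorial_ne_zero t)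
    have hdt : (Nat.factorial (d + t) : ℝ) ≠ 0 := Nat.cast_ne_zero.mpr (Nat.factorial_ne_zero _)
    field_simp
    rw [pow_add, mul_pow]
    linear_combination (μ ^ d * μ ^ t * α ^ d * (1 - α) ^ t) * hfac
  · rw [if_neg hds, binomPMF, Nat.choose_eq_zero_of_lt (by omega)]
    simp

lemma summable_pois_mul_binom (μ α : ℝ) (d : ℕ) :
    Summable fun s => poissonPMF μ s * binomPMF s α d := by
  have : (fun s => poissonPMF μ s * binomPMF s α d) =
      fun s => (Real.exp (-μ) * α ^ d * μ ^ d / (Nat.factorial d : ℝ)) *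
        (if d ≤ s then (μ * (1 - α)) ^ (s - d) / (Nat.factorial (s - d) : ℝ) else 0) := by
    funext s; exact pois_mul_binom μ α d s
  rw [this]
  apply Summable.mul_left
  have : Summable (fun t : ℕ => (if d ≤ t + d then (μ * (1 - α)) ^ (t + d - d) / (Nat.factorial (t + d - d) : ℝ) else 0)) := by
    simpa using Real.summable_pow_div_factorial (μ * (1 - α))
  exact (summable_nat_add_iff d).mp this

lemma exp_eq_tsum (x : ℝ) : Real.exp x = ∑' n : ℕ, x ^ n / (Nat.factorial n : ℝ) := by
  rw [Real.exp_eq_exp_ℝ, NormedSpace.exp_eq_tsum_div]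

lemma tsum_pois_mul_binom (μ α : ℝ) (d : ℕ) :
    ∑' s, poissonPMF μ s * binomPMF s α d = poissonPMF (α * μ) d := by
  have heq : ∀ s, poissonPMF μ s * binomPMF s α d =
      (Real.exp (-μ) * α ^ d * μ ^ d / (Nat.factorial d : ℝ)) *
        (if d ≤ s then (μ * (1 - α)) ^ (s - d) / (Nat.factorial (s - d) : ℝ) else 0) :=
    pois_mul_binom μ α d
  calc ∑' s, poissonPMF μ s * binomPMF s α d
      = (Real.exp (-μ) * α ^ d * μ ^ d / (Nat.factorial d : ℝ)) *
        ∑' s, (if d ≤ s then (μ * (1 - α)) ^ (s - d) / (Nat.factorial (s - d) : ℝ) else 0) := by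
        rw [← tsum_mul_left]; exact tsum_congr heq
    _ = poissonPMF (α * μ) d := by
        have hs : Summable (fun s : ℕ => (if d ≤ s then (μ * (1 - α)) ^ (s - d) / (Nat.factorial (s - d) : ℝ) else 0)) := by
          have : Summable (fun t : ℕ => (if d ≤ t + d then (μ * (1 - α)) ^ (t + d - d) / (Nat.factorial (t + d - d) : ℝ) else 0)) := by
            simpa using Real.summable_pow_div_factorial (μ * (1 - α))
          exact (summable_nat_add_iff d).mp this
        have := (hs.sum_add_tsum_nat_add d).symm
        have h0 : ∑ i ∈ Finset.range d, (if d ≤ i then (μ * (1 - α)) ^ (i - d) / (Nat.factorial (i - d) : ℝ) else 0) = 0 := by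
          apply Finset.sum_eq_zero; intro i hi
          rw [if_neg (by simpa using Finset.mem_range.mp hi)]
        rw [this, h0, zero_add]
        have h1 : ∑' t : ℕ, (if d ≤ t + d then (μ * (1 - α)) ^ (t + d - d) / (Nat.factorial (t + d - d) : ℝ) else 0)
            = Real.exp (μ * (1 - α)) := by
          rw [exp_eq_tsum]; apply tsum_congr; intro t; simp
        rw [h1, poissonPMF, mul_pow]
        have : Real.exp (-μ) * Real.exp (μ * (1 - α)) = Real.exp (-(μ * α)) := by
          rw [← Real.exp_add]; ring_nf
        field_simp
        linear_combination (α ^ d * μ ^ d) * this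

lemma sum_binom_mul_binom (y : ℕ) (p α : ℝ) (c : ℕ) :
    ∑ j ∈ Finset.range (y + 1), binomPMF y p j * binomPMF j α c = binomPMF y (p * α) c := by
  by_cases hcy : c ≤ y
  · have hsplit : Finset.range (y + 1) = Finset.range c ∪ Finset.Ico c (y + 1) := by
      rw [Finset.range_eq_Ico, Finset.range_eq_Ico,
        Finset.Ico_union_Ico_eq_Ico (Nat.zero_le c) (by omega)]
    rw [hsplit, Finset.sum_union (by
      simp [Finset.disjoint_left]; intro a ha; omega)]
    have h0 : ∑ j ∈ Finset.range c, binomPMF y p j * binomPMF j α c = 0 := by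
      apply Finset.sum_eq_zero; intro j hj
      rw [binomPMF_eq_zero α (Finset.mem_range.mp hj)]; ring
    rw [h0, zero_add, Finset.sum_Ico_eq_sum_range]
    have hyc : y + 1 - c = (y - c) + 1 := by omega
    rw [hyc]
    have hrhs : binomPMF y (p * α) c
        = (y.choose c : ℝ) * (p * α) ^ c * ((p * (1 - α)) + (1 - p)) ^ (y - c) := by
      rw [binomPMF]; ring_nf
    rw [hrhs, add_pow, Finset.mul_sum]
    apply Finset.sum_congr rfl
    intro i hi
    have hi' : i ≤ y - c := by have := Finset.mem_range.mp hi; omega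
    have hcmul : (y.choose (c + i) : ℝ) * ((c + i).choose c : ℝ)
        = (y.choose c : ℝ) * ((y - c).choose i : ℝ) := by
      have hc := Nat.choose_mul (n := y) (k := c + i) (s := c) (Nat.le_add_right c i)
      rw [Nat.add_sub_cancel_left] at hc
      exact_mod_cast congrArg Nat.cast hc
    rw [binomPMF, binomPMF]
    have e1 : c + i - c = i := by omega
    have e2 : y - (c + i) = (y - c) - i := by omega
    rw [e1, e2, pow_add, mul_pow, mul_pow]
    linear_combination (p ^ c * p ^ i * (1 - p) ^ (y - c - i) * α ^ c * (1 - α) ^ i) * hcmul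
  · rw [binomPMF_eq_zero (p * α) (by omega)]
    apply Finset.sum_eq_zero; intro j hj
    rw [binomPMF_eq_zero α (by simp at hj; omega)]; ring

lemma summable_binom_mul_binom (y : ℕ) (p α : ℝ) (c : ℕ) :
    Summable fun j => binomPMF y p j * binomPMF j α c :=
  summable_of_fin_support (N := y) fun j hj => by rw [binomPMF_eq_zero p hj]; ring

lemma tsum_binom_mul_binom (y : ℕ) (p α : ℝ) (c : ℕ) :
    ∑' j, binomPMF y p j * binomPMF j α c = binomPMF y (p * α) c := by
  rw [tsum_eq_sum (s := Finset.range (y + 1)) (fun j hj => by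
    rw [binomPMF_eq_zero p (by simpa using hj)]; ring)]
  exact sum_binom_mul_binom y p α c

/-- One-step generalized INAR(1) transition: from count n, go to (α ∘ n) + Z,
with α ∘ n a Binomial(n, α) (binomial thinning) and Z an independent
Poisson(lam) innovation. -/
noncomputable def stepPMF (α lam : ℝ) (n k : ℕ) : ℝ :=
  ∑ m ∈ Finset.range (min n k + 1), binomPMF n α m * poissonPMF lam (k - m)

/-- The h-step DP-INAR transition distribution started at the point mass at y:
apply, for i = 1, …, h in order, the one-step transition with innovation
rate `lam i`. -/
lemma binomPMF_add (j s : ℕ) (α : ℝ) (m : ℕ) :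
    binomPMF (j + s) α m = ∑ q ∈ Finset.HasAntidiagonal.antidiagonal m, binomPMF j α q.1 * binomPMF s α q.2 := by
  rw [binomPMF]
  have h := Nat.add_choose_eq j s m
  have h' : ((j + s).choose m : ℝ) = ∑ q ∈ Finset.HasAntidiagonal.antidiagonal m, (j.choose q.1 : ℝ) * (s.choose q.2 : ℝ) := by
    exact_mod_cast congrArg Nat.cast h
  rw [h', Finset.sum_mul, Finset.sum_mul]
  apply Finset.sum_congr rfl
  intro q hq
  have hm : q.1 + q.2 = m := Finset.HasAntidiagonal.mem_antidiagonal.mp hq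
  by_cases h1 : q.1 ≤ j
  · by_cases h2 : q.2 ≤ s
    · rw [binomPMF, binomPMF]
      have e1 : m = q.1 + q.2 := hm.symm
      rw [e1]
      have e2 : j + s - (q.1 + q.2) = (j - q.1) + (s - q.2) := by omega
      rw [e2, pow_add, pow_add]; ring
    · rw [binomPMF_eq_zero (n := s) α (show s < q.2 by omega),
        Nat.choose_eq_zero_of_lt (show s < q.2 by omega)]; simp
  · rw [binomPMF_eq_zero (n := j) α (show j < q.1 by omega),
        Nat.choose_eq_zero_of_lt (show j < q.1 by omega)]; simp

lemma conv_poisson_poisson (μ1 μ2 : ℝ) :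
    conv (poissonPMF μ1) (poissonPMF μ2) = poissonPMF (μ1 + μ2) := by
  funext k
  rw [conv, Finset.Nat.sum_antidiagonal_eq_sum_range_succ_mk, poissonPMF, add_pow,
    Finset.mul_sum, Finset.sum_div]
  apply Finset.sum_congr rfl
  intro i hi
  have hik : i ≤ k := by have := Finset.mem_range.mp hi; omega
  dsimp only
  rw [poissonPMF, poissonPMF]
  have hexp : Real.exp (-μ1) * Real.exp (-μ2) = Real.exp (-(μ1 + μ2)) := by
    rw [← Real.exp_add]; ring_nf
  have hi0 : (Nat.factorial i : ℝ) ≠ 0 := Nat.cast_ne_zero.mpr (Nat.factorial_ne_zero i)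
  have hki0 : (Nat.factorial (k - i) : ℝ) ≠ 0 := Nat.cast_ne_zero.mpr (Nat.factorial_ne_zero _)
  have hk0 : (Nat.factorial k : ℝ) ≠ 0 := Nat.cast_ne_zero.mpr (Nat.factorial_ne_zero k)
  have hfac : ((k.choose i : ℝ)) * (Nat.factorial i : ℝ) * (Nat.factorial (k - i) : ℝ)
      = (Nat.factorial k : ℝ) := by
    exact_mod_cast congrArg Nat.cast (Nat.choose_mul_factorial_mul_factorial hik)
  have hC : (k.choose i : ℝ) = (Nat.factorial k : ℝ) / ((Nat.factorial i : ℝ) * (Nat.factorial (k - i) : ℝ)) := by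
    rw [eq_div_iff (mul_ne_zero hi0 hki0), ← hfac]; ring
  rw [hC]
  field_simp
  have hexp2 : Real.exp (-μ1) * Real.exp (-μ2) = Real.exp (-μ2 - μ1) := by
    rw [← Real.exp_add]; ring_nf
  linear_combination (μ1 ^ i * μ2 ^ (k - i)) * hexp

lemma stepPMF_eq_conv (α lam : ℝ) (n k : ℕ) :
    stepPMF α lam n k = conv (binomPMF n α) (poissonPMF lam) k := by
  rw [conv, Finset.Nat.sum_antidiagonal_eq_sum_range_succ_mk, stepPMF]
  apply Finset.sum_subset
  · intro m hm
    simp only [Finset.mem_range] at hm ⊢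
    omega
  · intro m hm hm'
    simp only [Finset.mem_range] at hm hm'
    rw [binomPMF_eq_zero α (by omega)]; ring

lemma conv_binom_eq_sum_min (y : ℕ) (p : ℝ) (g : ℕ → ℝ) (k : ℕ) :
    conv (binomPMF y p) g k = ∑ m ∈ Finset.range (min y k + 1), binomPMF y p m * g (k - m) := by
  rw [conv, Finset.Nat.sum_antidiagonal_eq_sum_range_succ_mk]
  symm
  apply Finset.sum_subset
  · intro m hm
    simp only [Finset.mem_range] at hm ⊢
    omega
  · intro m hm hm'
    simp only [Finset.mem_range] at hm hm'
    rw [binomPMF_eq_zero p (by omega)]; ring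

lemma summable_norm_binom_mul_binom (y : ℕ) (p α : ℝ) (c : ℕ) :
    Summable fun j => ‖binomPMF y p j * binomPMF j α c‖ :=
  summable_norm_of_summable (summable_binom_mul_binom y p α c)

lemma summable_norm_pois_mul_binom (μ α : ℝ) (d : ℕ) :
    Summable fun s => ‖poissonPMF μ s * binomPMF s α d‖ :=
  summable_norm_of_summable (summable_pois_mul_binom μ α d)

/-- pointwise decomposition of `conv * binom` -/
lemma conv_mul_binom_eq (y : ℕ) (p μ α : ℝ) (c n : ℕ) :
    conv (binomPMF y p) (poissonPMF μ) n * binomPMF n α c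
      = ∑ q ∈ Finset.HasAntidiagonal.antidiagonal c, (∑ pr ∈ Finset.HasAntidiagonal.antidiagonal n,
          (binomPMF y p pr.1 * binomPMF pr.1 α q.1) * (poissonPMF μ pr.2 * binomPMF pr.2 α q.2)) := by
  rw [conv, Finset.sum_mul]
  rw [Finset.sum_comm]
  apply Finset.sum_congr rfl
  intro pr hpr
  have hn : pr.1 + pr.2 = n := Finset.HasAntidiagonal.mem_antidiagonal.mp hpr
  rw [← hn, binomPMF_add, Finset.mul_sum]
  apply Finset.sum_congr rfl
  intro q hq
  ring

lemma summable_inner (y : ℕ) (p μ α : ℝ) (a b : ℕ) :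
    Summable fun n => ∑ pr ∈ Finset.HasAntidiagonal.antidiagonal n,
        (binomPMF y p pr.1 * binomPMF pr.1 α a) * (poissonPMF μ pr.2 * binomPMF pr.2 α b) :=
  ((summable_norm_sum_mul_antidiagonal_of_summable_norm
    (summable_norm_binom_mul_binom y p α a)
    (summable_norm_pois_mul_binom μ α b))).of_norm

lemma summable_conv_mul_binom (y : ℕ) (p μ α : ℝ) (c : ℕ) :
    Summable fun n => conv (binomPMF y p) (poissonPMF μ) n * binomPMF n α c := by
  have : (fun n => conv (binomPMF y p) (poissonPMF μ) n * binomPMF n α c)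
      = fun n => ∑ q ∈ Finset.HasAntidiagonal.antidiagonal c, (∑ pr ∈ Finset.HasAntidiagonal.antidiagonal n,
          (binomPMF y p pr.1 * binomPMF pr.1 α q.1) * (poissonPMF μ pr.2 * binomPMF pr.2 α q.2)) := by
    funext n; exact conv_mul_binom_eq y p μ α c n
  rw [this]
  exact summable_sum fun q _ => summable_inner y p μ α q.1 q.2

lemma tsum_conv_mul_binom (y : ℕ) (p μ α : ℝ) (c : ℕ) :
    ∑' n, conv (binomPMF y p) (poissonPMF μ) n * binomPMF n α c
      = conv (binomPMF y (p * α)) (poissonPMF (α * μ)) c := by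
  calc ∑' n, conv (binomPMF y p) (poissonPMF μ) n * binomPMF n α c
      = ∑' n, ∑ q ∈ Finset.HasAntidiagonal.antidiagonal c, (∑ pr ∈ Finset.HasAntidiagonal.antidiagonal n,
          (binomPMF y p pr.1 * binomPMF pr.1 α q.1) * (poissonPMF μ pr.2 * binomPMF pr.2 α q.2)) :=
        tsum_congr fun n => conv_mul_binom_eq y p μ α c n
    _ = ∑ q ∈ Finset.HasAntidiagonal.antidiagonal c, ∑' n, (∑ pr ∈ Finset.HasAntidiagonal.antidiagonal n,
          (binomPMF y p pr.1 * binomPMF pr.1 α q.1) * (poissonPMF μ pr.2 * binomPMF pr.2 α q.2)) :=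
        Summable.tsum_finsetSum fun q _ => summable_inner y p μ α q.1 q.2
    _ = ∑ q ∈ Finset.HasAntidiagonal.antidiagonal c,
          binomPMF y (p * α) q.1 * poissonPMF (α * μ) q.2 := by
        apply Finset.sum_congr rfl
        intro q hq
        rw [← tsum_mul_tsum_eq_tsum_sum_antidiagonal_of_summable_norm
          (summable_norm_binom_mul_binom y p α q.1) (summable_norm_pois_mul_binom μ α q.2),
          tsum_binom_mul_binom, tsum_pois_mul_binom]
    _ = conv (binomPMF y (p * α)) (poissonPMF (α * μ)) c := rfl

lemma step_key (y : ℕ) (p μ α lam : ℝ) :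
    (fun k => ∑' n, conv (binomPMF y p) (poissonPMF μ) n * stepPMF α lam n k)
      = conv (binomPMF y (p * α)) (poissonPMF (α * μ + lam)) := by
  funext k
  calc ∑' n, conv (binomPMF y p) (poissonPMF μ) n * stepPMF α lam n k
      = ∑' n, ∑ q ∈ Finset.HasAntidiagonal.antidiagonal k,
          (conv (binomPMF y p) (poissonPMF μ) n * binomPMF n α q.1) * poissonPMF lam q.2 := by
        apply tsum_congr
        intro n
        rw [stepPMF_eq_conv]
        simp only [conv, Finset.mul_sum]
        apply Finset.sum_congr rfl; intro q hq; ring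
    _ = ∑ q ∈ Finset.HasAntidiagonal.antidiagonal k, ∑' n,
          (conv (binomPMF y p) (poissonPMF μ) n * binomPMF n α q.1) * poissonPMF lam q.2 :=
        Summable.tsum_finsetSum fun q _ => (summable_conv_mul_binom y p μ α q.1).mul_right _
    _ = ∑ q ∈ Finset.HasAntidiagonal.antidiagonal k,
          conv (binomPMF y (p * α)) (poissonPMF (α * μ)) q.1 * poissonPMF lam q.2 := by
        apply Finset.sum_congr rfl
        intro q hq
        rw [tsum_mul_right, tsum_conv_mul_binom]
    _ = conv (conv (binomPMF y (p * α)) (poissonPMF (α * μ))) (poissonPMF lam) k := rfl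
    _ = conv (binomPMF y (p * α)) (poissonPMF (α * μ + lam)) k := by
        rw [conv_assoc, conv_poisson_poisson]

noncomputable def hStepPMF (α : ℝ) (lam : ℕ → ℝ) (y : ℕ) : ℕ → ℕ → ℝ
  | 0, k => if k = y then 1 else 0
  | i + 1, k => ∑' n : ℕ, hStepPMF α lam y i n * stepPMF α (lam (i + 1)) n k


lemma hStepPMF_succ (α : ℝ) (lam : ℕ → ℝ) (y i k : ℕ) :
    hStepPMF α lam y (i + 1) k = ∑' n : ℕ, hStepPMF α lam y i n * stepPMF α (lam (i + 1)) n k := rfl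

lemma hStep_main (y : ℕ) (α : ℝ) (lam : ℕ → ℝ) (h : ℕ) (hh : 1 ≤ h) :
    hStepPMF α lam y h
      = conv (binomPMF y (α ^ h)) (poissonPMF (∑ i ∈ Finset.Icc 1 h, α ^ (h - i) * lam i)) := by
  induction h, hh using Nat.le_induction with
  | base =>
    funext k
    rw [show (1 : ℕ) = 0 + 1 from rfl, hStepPMF_succ]
    have h1 : ∀ n : ℕ, n ≠ y → hStepPMF α lam y 0 n * stepPMF α (lam (0 + 1)) n k = 0 := by
      intro n hn
      show (if n = y then (1:ℝ) else 0) * _ = 0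
      rw [if_neg hn, zero_mul]
    rw [tsum_eq_single y h1]
    show (if y = y then (1:ℝ) else 0) * _ = _
    rw [if_pos rfl, one_mul, stepPMF_eq_conv]
    simp [pow_one]
  | succ h hh ih =>
    funext k
    rw [hStepPMF_succ]
    have : ∀ n, hStepPMF α lam y h n * stepPMF α (lam (h + 1)) n k
        = conv (binomPMF y (α ^ h))
            (poissonPMF (∑ i ∈ Finset.Icc 1 h, α ^ (h - i) * lam i)) n
              * stepPMF α (lam (h + 1)) n k := by
      intro n; rw [ih]
    rw [tsum_congr this]
    have hk := congrFun (step_key y (α ^ h) (∑ i ∈ Finset.Icc 1 h, α ^ (h - i) * lam i) α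
      (lam (h + 1))) k
    rw [hk]
    have hpow : α ^ h * α = α ^ (h + 1) := (pow_succ α h).symm
    have hmu : α * (∑ i ∈ Finset.Icc 1 h, α ^ (h - i) * lam i) + lam (h + 1)
        = ∑ i ∈ Finset.Icc 1 (h + 1), α ^ (h + 1 - i) * lam i := by
      rw [Finset.sum_Icc_succ_top (by omega : 1 ≤ h + 1), Nat.sub_self, pow_zero, one_mul,
        Finset.mul_sum]
      congr 1
      apply Finset.sum_congr rfl
      intro i hi
      have hi' : i ≤ h := (Finset.mem_Icc.mp hi).2
      rw [show h + 1 - i = (h - i) + 1 by omega, pow_succ]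
      ring
    rw [hpow, hmu]

/-- The h-step DP-INAR transition distribution from y equals the convolution of a
Binomial(y, α^h) and a Poisson(μ_h) distribution, μ_h = ∑_{i=1}^h α^{h-i} λ_i. -/
theorem hStepPMF_eq_binomial_poisson_convolution
    (y : ℕ) (α : ℝ) (hα : α ∈ Set.Icc (0 : ℝ) 1)
    (h : ℕ) (hh : 1 ≤ h) (lam : ℕ → ℝ)
    (hlam : ∀ i, 1 ≤ i → i ≤ h → 0 < lam i) (k : ℕ) :
    hStepPMF α lam y h k =
      ∑ m ∈ Finset.range (min y k + 1),
        (y.choose m : ℝ) * (α ^ h) ^ m * (1 - α ^ h) ^ (y - m) *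
          (Real.exp (-(∑ i ∈ Finset.Icc 1 h, α ^ (h - i) * lam i)) *
            (∑ i ∈ Finset.Icc 1 h, α ^ (h - i) * lam i) ^ (k - m) /
              (Nat.factorial (k - m) : ℝ)) := by
  rw [hStep_main y α lam h hh, conv_binom_eq_sum_min]
  simp only [binomPMF, poissonPMF]
end

section
/- One-step update of the h-step law (induction step of Proposition 1): let α ∈ [0,1], y a natural number, μ > 0, λ > 0, and h ≥ 1. If X is distributed as the convolution of Binomial(y, α^h) and Poisson(μ), and Y = (α ∘ X) + Z where, given X, α ∘ X is Binomial(X, α) and Z is an independent Poisson(λ) random variable, then Y is distributed as the convolution of Binomial(y, α^{h+1}) and Poisson(αμ + λ). -/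
open scoped BigOperators

/-- Mass function at k of the convolution of Binomial(y, p) and Poisson(μ). -/
noncomputable def convBinPoisPMF (y : ℕ) (p μ : ℝ) (k : ℕ) : ℝ :=
  ∑ m ∈ Finset.range (min y k + 1), binomPMF y p m * poissonPMF μ (k - m)

section Auxiliary

lemma conv_eq_antidiag (y : ℕ) (p μ : ℝ) (n : ℕ) :
    convBinPoisPMF y p μ n =
      ∑ x ∈ Finset.HasAntidiagonal.antidiagonal n, binomPMF y p x.1 * poissonPMF μ x.2 := by
  rw [Finset.Nat.sum_antidiagonal_eq_sum_range_succ_mk, convBinPoisPMF]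
  apply Finset.sum_subset
  · exact Finset.range_subset_range.2 (by omega)
  · intro a ha hna
    simp only [Finset.mem_range] at ha hna
    have : y < a := by omega
    simp [binomPMF, Nat.choose_eq_zero_of_lt this]

lemma step_eq_antidiag (α lam : ℝ) (n k : ℕ) :
    stepPMF α lam n k =
      ∑ x ∈ Finset.HasAntidiagonal.antidiagonal k, binomPMF n α x.1 * poissonPMF lam x.2 := by
  rw [Finset.Nat.sum_antidiagonal_eq_sum_range_succ_mk, stepPMF]
  apply Finset.sum_subset
  · exact Finset.range_subset_range.2 (by omega)
  · intro a ha hna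
    simp only [Finset.mem_range] at ha hna
    have : n < a := by omega
    simp [binomPMF, Nat.choose_eq_zero_of_lt this]

lemma conv_eq_extended (y : ℕ) (p μ : ℝ) (n : ℕ) :
    convBinPoisPMF y p μ n =
      ∑ a ∈ Finset.range (y + 1),
        binomPMF y p a * (if a ≤ n then poissonPMF μ (n - a) else 0) := by
  rw [convBinPoisPMF]
  have h1 : ∑ a ∈ Finset.range (y + 1),
        binomPMF y p a * (if a ≤ n then poissonPMF μ (n - a) else 0)
      = ∑ a ∈ Finset.range (min y n + 1),
        binomPMF y p a * (if a ≤ n then poissonPMF μ (n - a) else 0) := by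
    refine (Finset.sum_subset (Finset.range_subset_range.2 (by omega)) ?_).symm
    intro a ha hna
    simp only [Finset.mem_range] at ha hna
    have : ¬ a ≤ n := by omega
    simp [this]
  rw [h1]
  refine Finset.sum_congr rfl fun a ha => ?_
  simp only [Finset.mem_range] at ha
  have : a ≤ n := by omega
  simp [this]

lemma binom_binom (y : ℕ) (p β : ℝ) (i : ℕ) :
    ∑ a ∈ Finset.range (y + 1), binomPMF y p a * binomPMF a β i
      = binomPMF y (p * β) i := by
  by_cases hiy : i ≤ y
  · have hsub : Finset.Ico i (y + 1) ⊆ Finset.range (y + 1) := by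
      intro a; simp only [Finset.mem_Ico, Finset.mem_range]; omega
    have h0 : ∀ a ∈ Finset.range (y + 1), a ∉ Finset.Ico i (y + 1) →
        binomPMF y p a * binomPMF a β i = 0 := by
      intro a ha hna
      simp only [Finset.mem_Ico, Finset.mem_range] at ha hna
      have : a < i := by omega
      simp [binomPMF, Nat.choose_eq_zero_of_lt this]
    rw [← Finset.sum_subset hsub h0, Finset.sum_Ico_eq_sum_range]
    have hyi : y + 1 - i = (y - i) + 1 := by omega
    rw [hyi]
    have key : ∀ b ∈ Finset.range (y - i + 1),
        binomPMF y p (i + b) * binomPMF (i + b) β i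
          = ((y.choose i : ℝ) * (p * β) ^ i) *
            (((y - i).choose b : ℝ) * (p * (1 - β)) ^ b * (1 - p) ^ ((y - i) - b)) := by
      intro b hb
      simp only [Finset.mem_range] at hb
      have hby : i + b ≤ y := by omega
      have hc : (y.choose (i + b) : ℝ) * ((i + b).choose i : ℝ)
          = (y.choose i : ℝ) * ((y - i).choose b : ℝ) := by
        rw [← Nat.cast_mul, ← Nat.cast_mul,
          Nat.choose_mul (Nat.le_add_right i b), Nat.add_sub_cancel_left]
      unfold binomPMF
      have e1 : (i + b) - i = b := by omega
      have e2 : y - (i + b) = (y - i) - b := by omega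
      rw [e1, e2, pow_add, mul_pow, mul_pow]
      linear_combination (p ^ i * β ^ i * p ^ b * (1 - β) ^ b *
        (1 - p) ^ ((y - i) - b)) * hc
    rw [Finset.sum_congr rfl key, ← Finset.mul_sum]
    have hbin : ∑ b ∈ Finset.range (y - i + 1),
        ((y - i).choose b : ℝ) * (p * (1 - β)) ^ b * (1 - p) ^ ((y - i) - b)
          = (p * (1 - β) + (1 - p)) ^ (y - i) := by
      rw [add_pow]
      apply Finset.sum_congr rfl
      intro b _
      ring
    rw [hbin, show p * (1 - β) + (1 - p) = 1 - p * β by ring, binomPMF]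
  · push_neg at hiy
    rw [binomPMF, Nat.choose_eq_zero_of_lt hiy]
    rw [Finset.sum_eq_zero]
    · simp
    · intro a ha
      simp only [Finset.mem_range] at ha
      have : a < i := by omega
      simp [binomPMF, Nat.choose_eq_zero_of_lt this]

lemma binomPMF_add_s4 (a v : ℕ) (β : ℝ) (m : ℕ) :
    binomPMF (a + v) β m
      = ∑ x ∈ Finset.HasAntidiagonal.antidiagonal m, binomPMF a β x.1 * binomPMF v β x.2 := by
  have key : ∀ x ∈ Finset.HasAntidiagonal.antidiagonal m,
      binomPMF a β x.1 * binomPMF v β x.2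
        = ((a.choose x.1 * v.choose x.2 : ℕ) : ℝ) * (β ^ m * (1 - β) ^ ((a + v) - m)) := by
    rintro ⟨i, j⟩ hx
    simp only [Finset.HasAntidiagonal.mem_antidiagonal] at hx
    by_cases hi : i ≤ a
    · by_cases hj : j ≤ v
      · unfold binomPMF
        rw [show (a + v) - m = (a - i) + (v - j) from by omega, pow_add,
          show m = i + j from hx.symm, pow_add, Nat.cast_mul]
        ring
      · push_neg at hj
        simp [binomPMF, Nat.choose_eq_zero_of_lt hj]
    · push_neg at hi
      simp [binomPMF, Nat.choose_eq_zero_of_lt hi]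
  rw [Finset.sum_congr rfl key, ← Finset.sum_mul, ← Nat.cast_sum, ← Nat.add_choose_eq,
    binomPMF]
  ring

lemma poisson_conv (A B : ℝ) (k : ℕ) :
    ∑ x ∈ Finset.HasAntidiagonal.antidiagonal k, poissonPMF A x.1 * poissonPMF B x.2
      = poissonPMF (A + B) k := by
  rw [Finset.Nat.sum_antidiagonal_eq_sum_range_succ_mk]
  have key : ∀ i ∈ Finset.range (k + 1),
      poissonPMF A i * poissonPMF B (k - i)
        = Real.exp (-(A + B)) * (A ^ i * B ^ (k - i) * (k.choose i : ℝ)) / (k.factorial : ℝ) := by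
    intro i hi
    simp only [Finset.mem_range] at hi
    have hik : i ≤ k := by omega
    have hfac : (k.choose i : ℝ) * (i.factorial : ℝ) * ((k - i).factorial : ℝ)
        = (k.factorial : ℝ) := by
      exact_mod_cast congrArg (Nat.cast (R := ℝ)) (Nat.choose_mul_factorial_mul_factorial hik)
    unfold poissonPMF
    rw [neg_add, Real.exp_add]
    have h1 : (i.factorial : ℝ) ≠ 0 := Nat.cast_ne_zero.2 (Nat.factorial_ne_zero _)
    have h2 : ((k - i).factorial : ℝ) ≠ 0 := Nat.cast_ne_zero.2 (Nat.factorial_ne_zero _)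
    have h3 : (k.factorial : ℝ) ≠ 0 := Nat.cast_ne_zero.2 (Nat.factorial_ne_zero _)
    field_simp
    linear_combination (-(A ^ i * B ^ (k - i))) * hfac
  rw [Finset.sum_congr rfl key, ← Finset.sum_div, ← Finset.mul_sum, poissonPMF, add_pow]

lemma exp_tsum (x : ℝ) : ∑' n : ℕ, x ^ n / (n.factorial : ℝ) = Real.exp x := by
  rw [Real.exp_eq_exp_ℝ, NormedSpace.exp_eq_tsum_div]

lemma poisson_thin_shift (μ β : ℝ) (j b : ℕ) :
    poissonPMF μ (j + b) * binomPMF (j + b) β j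
      = (Real.exp (-μ) * β ^ j * μ ^ j / (j.factorial : ℝ)) *
        ((μ * (1 - β)) ^ b / (b.factorial : ℝ)) := by
  unfold poissonPMF binomPMF
  rw [show j + b = b + j from by omega]
  have e1 : (b + j) - j = b := by omega
  rw [e1]
  have hfac : ((b + j).choose j : ℝ) * (b.factorial : ℝ) * (j.factorial : ℝ)
      = ((b + j).factorial : ℝ) := by
    exact_mod_cast congrArg (Nat.cast (R := ℝ))
      (Nat.add_choose_mul_factorial_mul_factorial b j)
  have h1 : (j.factorial : ℝ) ≠ 0 := Nat.cast_ne_zero.2 (Nat.factorial_ne_zero _)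
  have h2 : (b.factorial : ℝ) ≠ 0 := Nat.cast_ne_zero.2 (Nat.factorial_ne_zero _)
  have h3 : ((b + j).factorial : ℝ) ≠ 0 := Nat.cast_ne_zero.2 (Nat.factorial_ne_zero _)
  rw [pow_add, mul_pow]
  field_simp
  linear_combination (μ ^ b * μ ^ j * β ^ j * (1 - β) ^ b) * hfac

lemma poisson_thin_zero (μ β : ℝ) (j : ℕ) :
    ∀ v : ℕ, v ∉ Set.range (fun b : ℕ => j + b) →
      poissonPMF μ v * binomPMF v β j = 0 := by
  intro v hv
  have : v < j := by
    by_contra hc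
    push_neg at hc
    exact hv ⟨v - j, show j + (v - j) = v by omega⟩
  simp [binomPMF, Nat.choose_eq_zero_of_lt this]

lemma add_inj (j : ℕ) : Function.Injective (fun b : ℕ => j + b) :=
  add_right_injective j

lemma summable_poisson_thin (μ β : ℝ) (j : ℕ) :
    Summable (fun v => poissonPMF μ v * binomPMF v β j) := by
  have hcomp : (fun v => poissonPMF μ v * binomPMF v β j) ∘ (fun b : ℕ => j + b)
      = fun b => (Real.exp (-μ) * β ^ j * μ ^ j / (j.factorial : ℝ)) *
        ((μ * (1 - β)) ^ b / (b.factorial : ℝ)) :=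
    funext fun b => poisson_thin_shift μ β j b
  refine ((add_inj j).summable_iff (poisson_thin_zero μ β j)).1 ?_
  rw [hcomp]
  exact (Real.summable_pow_div_factorial _).mul_left _

lemma poisson_thin (μ β : ℝ) (j : ℕ) :
    ∑' v, poissonPMF μ v * binomPMF v β j = poissonPMF (β * μ) j := by
  have hsupp : Function.support (fun v => poissonPMF μ v * binomPMF v β j)
      ⊆ Set.range (fun b : ℕ => j + b) := by
    intro v hv
    by_contra hc
    exact hv (poisson_thin_zero μ β j v hc)
  rw [← (add_inj j).tsum_eq hsupp]
  rw [tsum_congr (fun b => poisson_thin_shift μ β j b)]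
  rw [Summable.tsum_mul_left _ (Real.summable_pow_div_factorial _), exp_tsum]
  have h2 : Real.exp (-μ) * Real.exp (μ * (1 - β)) = Real.exp (-(β * μ)) := by
    rw [← Real.exp_add]
    congr 1
    ring
  unfold poissonPMF
  rw [mul_pow]
  linear_combination (β ^ j * μ ^ j / (j.factorial : ℝ)) * h2

/-- The shifted form of the summand appearing in the thinning of the Poisson part. -/
lemma T_comp' (a : ℕ) (β μ : ℝ) (m v : ℕ) :
    (if a ≤ a + v then poissonPMF μ ((a + v) - a) else 0) * binomPMF (a + v) β m
      = ∑ x ∈ Finset.HasAntidiagonal.antidiagonal m,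
          binomPMF a β x.1 * (poissonPMF μ v * binomPMF v β x.2) := by
  have h1 : a ≤ a + v := by omega
  have h2 : (a + v) - a = v := by omega
  rw [if_pos h1, h2, binomPMF_add_s4, Finset.mul_sum]
  refine Finset.sum_congr rfl fun x _ => by ring

lemma T_comp (a : ℕ) (β μ : ℝ) (m : ℕ) :
    ((fun n => (if a ≤ n then poissonPMF μ (n - a) else 0) * binomPMF n β m)
        ∘ (fun v : ℕ => a + v))
      = fun v => ∑ x ∈ Finset.HasAntidiagonal.antidiagonal m,
          binomPMF a β x.1 * (poissonPMF μ v * binomPMF v β x.2) :=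
  funext fun v => T_comp' a β μ m v

lemma T_zero (a : ℕ) (β μ : ℝ) (m : ℕ) :
    ∀ n : ℕ, n ∉ Set.range (fun v : ℕ => a + v) →
      (if a ≤ n then poissonPMF μ (n - a) else 0) * binomPMF n β m = 0 := by
  intro n hn
  have : ¬ a ≤ n := by
    by_contra hc
    exact hn ⟨n - a, show a + (n - a) = n by omega⟩
  simp [this]

lemma T_summable (a : ℕ) (β μ : ℝ) (m : ℕ) :
    Summable (fun n => (if a ≤ n then poissonPMF μ (n - a) else 0) * binomPMF n β m) := by
  refine ((add_inj a).summable_iff (T_zero a β μ m)).1 ?_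
  rw [T_comp]
  exact summable_sum fun x _ => (summable_poisson_thin μ β x.2).mul_left _

lemma T_eq (a : ℕ) (β μ : ℝ) (m : ℕ) :
    ∑' n, (if a ≤ n then poissonPMF μ (n - a) else 0) * binomPMF n β m
      = ∑ x ∈ Finset.HasAntidiagonal.antidiagonal m, binomPMF a β x.1 * poissonPMF (β * μ) x.2 := by
  have hsupp : Function.support
        (fun n => (if a ≤ n then poissonPMF μ (n - a) else 0) * binomPMF n β m)
      ⊆ Set.range (fun v : ℕ => a + v) := by
    intro n hn
    by_contra hc
    exact hn (T_zero a β μ m n hc)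
  rw [← (add_inj a).tsum_eq hsupp]
  rw [tsum_congr (fun v => T_comp' a β μ m v)]
  have hs : ∑' v : ℕ, ∑ x ∈ Finset.HasAntidiagonal.antidiagonal m,
        binomPMF a β x.1 * (poissonPMF μ v * binomPMF v β x.2)
      = ∑ x ∈ Finset.HasAntidiagonal.antidiagonal m,
          ∑' v : ℕ, binomPMF a β x.1 * (poissonPMF μ v * binomPMF v β x.2) :=
    Summable.tsum_finsetSum fun x _ => (summable_poisson_thin μ β x.2).mul_left _
  rw [hs]
  refine Finset.sum_congr rfl fun x _ => ?_
  rw [Summable.tsum_mul_left _ (summable_poisson_thin μ β x.2), poisson_thin]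

lemma H_fun (y : ℕ) (p μ β : ℝ) (m : ℕ) :
    (fun n => convBinPoisPMF y p μ n * binomPMF n β m)
      = fun n => ∑ a ∈ Finset.range (y + 1),
          binomPMF y p a * ((if a ≤ n then poissonPMF μ (n - a) else 0) * binomPMF n β m) := by
  funext n
  rw [conv_eq_extended, Finset.sum_mul]
  refine Finset.sum_congr rfl fun a _ => by ring

lemma H_summable (y : ℕ) (p μ β : ℝ) (m : ℕ) :
    Summable (fun n => convBinPoisPMF y p μ n * binomPMF n β m) := by
  rw [H_fun]
  exact summable_sum fun a _ => (T_summable a β μ m).mul_left _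

lemma H_eq (y : ℕ) (p μ β : ℝ) (m : ℕ) :
    ∑' n, convBinPoisPMF y p μ n * binomPMF n β m
      = ∑ x ∈ Finset.HasAntidiagonal.antidiagonal m, binomPMF y (p * β) x.1 * poissonPMF (β * μ) x.2 := by
  rw [tsum_congr (fun n => congrFun (H_fun y p μ β m) n)]
  have hs : ∑' n : ℕ, ∑ a ∈ Finset.range (y + 1),
        binomPMF y p a * ((if a ≤ n then poissonPMF μ (n - a) else 0) * binomPMF n β m)
      = ∑ a ∈ Finset.range (y + 1),
          ∑' n : ℕ, binomPMF y p a * ((if a ≤ n then poissonPMF μ (n - a) else 0) * binomPMF n β m) :=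
    Summable.tsum_finsetSum fun a _ => (T_summable a β μ m).mul_left _
  rw [hs]
  have h1 : ∀ a ∈ Finset.range (y + 1),
      ∑' n, binomPMF y p a * ((if a ≤ n then poissonPMF μ (n - a) else 0) * binomPMF n β m)
        = ∑ x ∈ Finset.HasAntidiagonal.antidiagonal m,
            binomPMF y p a * binomPMF a β x.1 * poissonPMF (β * μ) x.2 := by
    intro a _
    rw [Summable.tsum_mul_left _ (T_summable a β μ m), T_eq, Finset.mul_sum]
    refine Finset.sum_congr rfl fun x _ => by ring
  rw [Finset.sum_congr rfl h1, Finset.sum_comm]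
  refine Finset.sum_congr rfl fun x _ => ?_
  rw [← binom_binom y p β x.1, Finset.sum_mul]

lemma triple_rearrange (k : ℕ) (f : ℕ → ℕ → ℕ → ℝ) :
    ∑ x ∈ Finset.HasAntidiagonal.antidiagonal k, ∑ w ∈ Finset.HasAntidiagonal.antidiagonal x.1, f w.1 w.2 x.2
      = ∑ x ∈ Finset.HasAntidiagonal.antidiagonal k, ∑ w ∈ Finset.HasAntidiagonal.antidiagonal x.2, f x.1 w.1 w.2 := by
  rw [Finset.Nat.sum_antidiagonal_eq_sum_range_succ_mk,
    Finset.Nat.sum_antidiagonal_eq_sum_range_succ_mk]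
  simp only [Finset.Nat.sum_antidiagonal_eq_sum_range_succ_mk]
  rw [Finset.sum_sigma', Finset.sum_sigma']
  refine Finset.sum_nbij' (fun p => ⟨p.2, p.1 - p.2⟩) (fun q => ⟨q.1 + q.2, q.1⟩)
    ?_ ?_ ?_ ?_ ?_
  · rintro ⟨m, i⟩ hp
    simp only [Finset.mem_sigma, Finset.mem_range] at hp ⊢
    omega
  · rintro ⟨i, j⟩ hq
    simp only [Finset.mem_sigma, Finset.mem_range] at hq ⊢
    omega
  · rintro ⟨m, i⟩ hp
    simp only [Finset.mem_sigma, Finset.mem_range] at hp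
    simp only [Sigma.mk.inj_iff, heq_eq_eq]
    exact ⟨by omega, trivial⟩
  · rintro ⟨i, j⟩ hq
    simp only [Finset.mem_sigma, Finset.mem_range] at hq
    simp only [Sigma.mk.inj_iff, heq_eq_eq]
    exact ⟨trivial, by omega⟩
  · rintro ⟨m, i⟩ hp
    simp only [Finset.mem_sigma, Finset.mem_range] at hp
    have : k - m = (k - i) - (m - i) := by omega
    rw [this]

lemma conv_step_antidiag (y : ℕ) (P M lam : ℝ) (k : ℕ) :
    ∑ x ∈ Finset.HasAntidiagonal.antidiagonal k,
        (∑ w ∈ Finset.HasAntidiagonal.antidiagonal x.1, binomPMF y P w.1 * poissonPMF M w.2) *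
          poissonPMF lam x.2
      = ∑ x ∈ Finset.HasAntidiagonal.antidiagonal k, binomPMF y P x.1 * poissonPMF (M + lam) x.2 := by
  have h1 : ∀ x ∈ Finset.HasAntidiagonal.antidiagonal k,
      (∑ w ∈ Finset.HasAntidiagonal.antidiagonal x.1, binomPMF y P w.1 * poissonPMF M w.2) *
          poissonPMF lam x.2
        = ∑ w ∈ Finset.HasAntidiagonal.antidiagonal x.1,
            binomPMF y P w.1 * poissonPMF M w.2 * poissonPMF lam x.2 := by
    intro x _
    rw [Finset.sum_mul]
  rw [Finset.sum_congr rfl h1,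
    triple_rearrange k (fun i j r => binomPMF y P i * poissonPMF M j * poissonPMF lam r)]
  refine Finset.sum_congr rfl fun x _ => ?_
  rw [← poisson_conv M lam x.2, Finset.mul_sum]
  refine Finset.sum_congr rfl fun w _ => by ring

end Auxiliary

/-- One-step update of the h-step law (induction step of Proposition 1): if X is
distributed as the convolution of Binomial(y, α^h) and Poisson(μ), and
Y = (α ∘ X) + Z with a Binomial(X, α) thinning and an independent Poisson(λ)
innovation Z, then Y is distributed as the convolution of Binomial(y, α^{h+1})
and Poisson(αμ + λ). -/
theorem one_step_update_of_binomial_poisson_convolution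
    (α : ℝ) (hα : α ∈ Set.Icc (0 : ℝ) 1) (y : ℕ) (μ lam : ℝ)
    (hμ : 0 < μ) (hlam : 0 < lam) (h : ℕ) (hh : 1 ≤ h) (k : ℕ) :
    ∑' n : ℕ, convBinPoisPMF y (α ^ h) μ n * stepPMF α lam n k =
      convBinPoisPMF y (α ^ (h + 1)) (α * μ + lam) k := by
  have step1 : ∀ n : ℕ, convBinPoisPMF y (α ^ h) μ n * stepPMF α lam n k
      = ∑ x ∈ Finset.HasAntidiagonal.antidiagonal k,
          convBinPoisPMF y (α ^ h) μ n * binomPMF n α x.1 * poissonPMF lam x.2 := by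
    intro n
    rw [step_eq_antidiag, Finset.mul_sum]
    refine Finset.sum_congr rfl fun x _ => by ring
  rw [tsum_congr step1]
  have hs : ∑' n : ℕ, ∑ x ∈ Finset.HasAntidiagonal.antidiagonal k,
        convBinPoisPMF y (α ^ h) μ n * binomPMF n α x.1 * poissonPMF lam x.2
      = ∑ x ∈ Finset.HasAntidiagonal.antidiagonal k,
          ∑' n : ℕ, convBinPoisPMF y (α ^ h) μ n * binomPMF n α x.1 * poissonPMF lam x.2 :=
    Summable.tsum_finsetSum fun x _ => ((H_summable y (α ^ h) μ α x.1).mul_right _).congr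
      (fun n => by ring)
  rw [hs]
  have step2 : ∀ x ∈ Finset.HasAntidiagonal.antidiagonal k,
      ∑' n, convBinPoisPMF y (α ^ h) μ n * binomPMF n α x.1 * poissonPMF lam x.2
        = (∑ w ∈ Finset.HasAntidiagonal.antidiagonal x.1,
            binomPMF y (α ^ h * α) w.1 * poissonPMF (α * μ) w.2) * poissonPMF lam x.2 := by
    intro x _
    rw [tsum_mul_right, H_eq]
  rw [Finset.sum_congr rfl step2, conv_step_antidiag, conv_eq_antidiag, pow_succ]
end
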